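/- Let X ≤ Y be k-heights of a finite graph G=(V,E) and let B ⊆ V be a block such that both Ω_{B|X} and Ω_{B|Y} are nonempty. Then, viewed as distributions on the poset of k-heights of G[B], the uniform distribution on Ω_{B|X} is stochastically dominated by the uniform distribution on Ω_{B|Y}: for every upset U of the lattice of k-heights of G[B], |U ∩ Ω_{B|X}| / |Ω_{B|X}| ≤ |U ∩ Ω_{B|Y}| / |Ω_{B|Y}|. -/
import Mathlib


def IsKHeight {V : Type*} (G : SimpleGraph V) (k : ℕ) (φ : V → ℕ) : Prop :=
  (∀ v, φ v ≤ k) ∧ ∀ ⦃v w : V⦄, G.Adj v w → |(φ v : ℤ) - (φ w : ℤ)| ≤ 1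

def replaceOn {V : Type*} (B : Set V) [DecidablePred (· ∈ B)]
    (X : V → ℕ) (φ : ↥B → ℕ) : V → ℕ :=
  fun v => if h : v ∈ B then φ ⟨v, h⟩ else X v

/-- The `k`-heights of the induced subgraph `G[B]`. -/
def heightsOn {V : Type*} (G : SimpleGraph V) (k : ℕ) (B : Set V) : Set (↥B → ℕ) :=
  {φ | IsKHeight (G.induce B) k φ}

/-- The admissible fillings `Ω_{B|X}`. -/
def admissibleFillings {V : Type*} (G : SimpleGraph V) (k : ℕ) (B : Set V)
    [DecidablePred (· ∈ B)] (X : V → ℕ) : Set (↥B → ℕ) :=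
  {φ | IsKHeight (G.induce B) k φ ∧ IsKHeight G k (replaceOn B X φ)}

/- ### Auxiliary lemmas -/

lemma IsKHeight.inf {V : Type*} {G : SimpleGraph V} {k : ℕ} {f g : V → ℕ}
    (hf : IsKHeight G k f) (hg : IsKHeight G k g) : IsKHeight G k (f ⊓ g) := by
  constructor
  · intro v
    exact le_trans inf_le_left (hf.1 v)
  · intro v w hvw
    have h1 := hf.2 hvw
    have h2 := hg.2 hvw
    have : ((f ⊓ g) v : ℤ) = min (f v : ℤ) (g v : ℤ) := by
      simp [Pi.inf_apply, Nat.cast_min]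
    have h3 : ((f ⊓ g) w : ℤ) = min (f w : ℤ) (g w : ℤ) := by
      simp [Pi.inf_apply, Nat.cast_min]
    rw [this, h3]
    exact le_trans (abs_min_sub_min_le_max _ _ _ _) (max_le h1 h2)

lemma IsKHeight.sup {V : Type*} {G : SimpleGraph V} {k : ℕ} {f g : V → ℕ}
    (hf : IsKHeight G k f) (hg : IsKHeight G k g) : IsKHeight G k (f ⊔ g) := by
  constructor
  · intro v
    exact sup_le (hf.1 v) (hg.1 v)
  · intro v w hvw
    have h1 := hf.2 hvw
    have h2 := hg.2 hvw
    have h3 : ((f ⊔ g) v : ℤ) = max (f v : ℤ) (g v : ℤ) := by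
      simp [Pi.sup_apply, Nat.cast_max]
    have h4 : ((f ⊔ g) w : ℤ) = max (f w : ℤ) (g w : ℤ) := by
      simp [Pi.sup_apply, Nat.cast_max]
    rw [h3, h4]
    exact le_trans (abs_max_sub_max_le_max _ _ _ _) (max_le h1 h2)

lemma replaceOn_inf {V : Type*} (B : Set V) [DecidablePred (· ∈ B)]
    {X Y : V → ℕ} (hXY : X ≤ Y) (φ ψ : ↥B → ℕ) :
    replaceOn B X (φ ⊓ ψ) = replaceOn B X φ ⊓ replaceOn B Y ψ := by
  funext v
  simp only [replaceOn, Pi.inf_apply]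
  split
  · rfl
  · exact (inf_eq_left.2 (hXY v)).symm

lemma replaceOn_sup {V : Type*} (B : Set V) [DecidablePred (· ∈ B)]
    {X Y : V → ℕ} (hXY : X ≤ Y) (φ ψ : ↥B → ℕ) :
    replaceOn B Y (φ ⊔ ψ) = replaceOn B X φ ⊔ replaceOn B Y ψ := by
  funext v
  simp only [replaceOn, Pi.sup_apply]
  split
  · rfl
  · exact (sup_eq_right.2 (hXY v)).symm

lemma sum_indicator_eq_ncard {α : Type*} (A Z : Set α) (hA : A.Finite) (hZ : Z.Finite)
    (hsub : A ⊆ Z) :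
    ∑ a ∈ hZ.toFinset, A.indicator (1 : α → ℝ) a = A.ncard := by
  classical
  rw [← Finset.sum_subset (Set.Finite.toFinset_subset_toFinset.2 hsub)
      (fun x _ hx =>
        Set.indicator_of_notMem (fun hxA => hx (hA.mem_toFinset.2 hxA)) _)]
  rw [Finset.sum_congr rfl (fun x hx => Set.indicator_of_mem (hA.mem_toFinset.1 hx) _)]
  simp [Set.ncard_eq_toFinset_card A hA]

lemma sum_indicator_le_ncard {α : Type*} [DecidableEq α] (A : Set α) (hA : A.Finite)
    (F : Finset α) :
    ∑ a ∈ F, A.indicator (1 : α → ℝ) a ≤ A.ncard := by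
  classical
  have h1 : ∑ a ∈ F, A.indicator (1 : α → ℝ) a
      = ∑ a ∈ F.filter (· ∈ A), (1 : ℝ) := by
    rw [Finset.sum_filter]
    refine Finset.sum_congr rfl fun x _ => ?_
    by_cases hx : x ∈ A <;> simp [Set.indicator_apply, hx]
  rw [h1, Finset.sum_const, nsmul_eq_mul, mul_one]
  have h2 : F.filter (· ∈ A) ⊆ hA.toFinset := fun x hx => by
    simpa using (Finset.mem_filter.1 hx).2
  have := Finset.card_le_card h2
  rw [Set.ncard_eq_toFinset_card A hA]
  exact_mod_cast this

/-- For `k`-heights `X ≤ Y`, the uniform distribution on `Ω_{B|X}` is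
stochastically dominated by the uniform distribution on `Ω_{B|Y}`: for every
upset `U` of the lattice of `k`-heights of `G[B]`,
`|U ∩ Ω_{B|X}|/|Ω_{B|X}| ≤ |U ∩ Ω_{B|Y}|/|Ω_{B|Y}|`. -/
theorem uniform_fillings_stochastically_dominated {V : Type*} [Fintype V]
    (G : SimpleGraph V) (k : ℕ) (B : Set V) [DecidablePred (· ∈ B)]
    (X Y : V → ℕ) (hX : IsKHeight G k X) (hY : IsKHeight G k Y) (hXY : X ≤ Y)
    (hXne : (admissibleFillings G k B X).Nonempty)
    (hYne : (admissibleFillings G k B Y).Nonempty)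
    (U : Set (↥B → ℕ)) (hUsub : U ⊆ heightsOn G k B)
    (hU : ∀ a b, a ∈ heightsOn G k B → b ∈ heightsOn G k B →
      a ∈ U → a ≤ b → b ∈ U) :
    ((U ∩ admissibleFillings G k B X).ncard : ℝ) / (admissibleFillings G k B X).ncard ≤
      ((U ∩ admissibleFillings G k B Y).ncard : ℝ) / (admissibleFillings G k B Y).ncard := by
  classical
  haveI : DecidableEq (↥B → ℕ) := Classical.decEq _
  set S := admissibleFillings G k B X with hSdef
  set T := admissibleFillings G k B Y with hTdef
  -- finiteness
  have hbig : ({φ : ↥B → ℕ | ∀ v, φ v ≤ k}).Finite := by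
    have hsub : {φ : ↥B → ℕ | ∀ v, φ v ≤ k} ⊆ Set.pi Set.univ (fun _ => Set.Iic k) := by
      intro φ hφ v _
      exact hφ v
    exact (Set.Finite.pi (fun _ => Set.finite_Iic k)).subset hsub
  have hSfin : S.Finite := hbig.subset fun φ hφ => hφ.1.1
  have hTfin : T.Finite := hbig.subset fun φ hφ => hφ.1.1
  have hUSfin : (U ∩ S).Finite := hSfin.subset Set.inter_subset_right
  have hUTfin : (U ∩ T).Finite := hTfin.subset Set.inter_subset_right
  -- key closure property
  have key : ∀ a b : ↥B → ℕ, a ∈ S → b ∈ T → a ⊓ b ∈ S ∧ a ⊔ b ∈ T := by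
    intro a b ha hb
    refine ⟨⟨ha.1.inf hb.1, ?_⟩, ⟨ha.1.sup hb.1, ?_⟩⟩
    · rw [replaceOn_inf B hXY]
      exact ha.2.inf hb.2
    · rw [replaceOn_sup B hXY]
      exact ha.2.sup hb.2
  have keyU : ∀ a b : ↥B → ℕ, a ∈ U ∩ S → b ∈ T → a ⊓ b ∈ S ∧ a ⊔ b ∈ U ∩ T := by
    intro a b ha hb
    obtain ⟨haU, haS⟩ := ha
    obtain ⟨h1, h2⟩ := key a b haS hb
    refine ⟨h1, ?_, h2⟩
    exact hU a (a ⊔ b) haS.1 h2.1 haU le_sup_left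
  -- four functions theorem
  have h4 := four_functions_theorem ((U ∩ S).indicator (1 : (↥B → ℕ) → ℝ))
    (T.indicator (1 : (↥B → ℕ) → ℝ))
    (S.indicator (1 : (↥B → ℕ) → ℝ)) ((U ∩ T).indicator (1 : (↥B → ℕ) → ℝ))
    (Set.indicator_nonneg (fun _ _ => zero_le_one))
    (Set.indicator_nonneg (fun _ _ => zero_le_one))
    (Set.indicator_nonneg (fun _ _ => zero_le_one))
    (Set.indicator_nonneg (fun _ _ => zero_le_one))
    (by
      intro a b
      by_cases ha : a ∈ U ∩ S
      · by_cases hb : b ∈ T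
        · obtain ⟨h1, h2⟩ := keyU a b ha hb
          rw [Set.indicator_of_mem ha, Set.indicator_of_mem hb,
            Set.indicator_of_mem h1, Set.indicator_of_mem h2]
          norm_num
        · rw [Set.indicator_of_notMem hb]
          rw [mul_zero]
          exact mul_nonneg (Set.indicator_nonneg (fun _ _ => zero_le_one) _)
            (Set.indicator_nonneg (fun _ _ => zero_le_one) _)
      · rw [Set.indicator_of_notMem ha]
        rw [zero_mul]
        exact mul_nonneg (Set.indicator_nonneg (fun _ _ => zero_le_one) _)
          (Set.indicator_nonneg (fun _ _ => zero_le_one) _))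
    hSfin.toFinset hTfin.toFinset
  -- evaluate the sums
  rw [sum_indicator_eq_ncard (U ∩ S) S hUSfin hSfin Set.inter_subset_right,
    sum_indicator_eq_ncard T T hTfin hTfin le_rfl] at h4
  have hmain : ((U ∩ S).ncard : ℝ) * T.ncard ≤ (S.ncard : ℝ) * (U ∩ T).ncard :=
    h4.trans (mul_le_mul (sum_indicator_le_ncard S hSfin _)
      (sum_indicator_le_ncard (U ∩ T) hUTfin _)
      (Finset.sum_nonneg fun _ _ => Set.indicator_nonneg (fun _ _ => zero_le_one) _)
      (Nat.cast_nonneg _))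
  -- conclude
  have hSpos : (0 : ℝ) < S.ncard := by
    exact_mod_cast (Set.ncard_pos hSfin).2 hXne
  have hTpos : (0 : ℝ) < T.ncard := by
    exact_mod_cast (Set.ncard_pos hTfin).2 hYne
  rw [div_le_div_iff₀ hSpos hTpos]
  linarith [hmain]
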